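/- arXiv:1901.09328 — 3 statements merged into one kernel-verified Lean document; each statement's English description precedes it below -/
import Mathlib

section
/- Let μ(N_n, B_n) be a Cantor–Moran measure with B_n ⊂ {0,1,...,N_n−1} and suppose c := sup_n c_{ν_{>n}} < 1, where [0, c_{ν_{>n}}] is the convex hull of the support of the pull-back tail measure ν_{>n}. Then every weak limit ν of {ν_{>n}} satisfies ν({1}) = 0, and hence {ν_{>n}} is an admissible family (all integral periodic zero sets of the ν_{>n} and of their weak limits are empty). -/
open MeasureTheory Filter Topology

/-- Fourier transform of a Borel measure on `ℝ`: `μ̂(ξ) = ∫ e^{-2πiξx} dμ(x)`. -/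
noncomputable def FT (μ : Measure ℝ) (ξ : ℝ) : ℂ :=
  ∫ x, Complex.exp (-(2 * (Real.pi : ℂ) * Complex.I) * (ξ : ℂ) * (x : ℂ)) ∂μ

/-- The integral periodic zero set `Z(μ) = {ξ : μ̂(ξ + k) = 0 for all k ∈ ℤ}`. -/
def Zset (μ : Measure ℝ) : Set ℝ := {ξ : ℝ | ∀ k : ℤ, FT μ (ξ + (k : ℝ)) = 0}

/-- `ρ = (1/2)(δ₀ + δ₁)`. -/
noncomputable def rho : Measure ℝ :=
  (2 : ENNReal)⁻¹ • Measure.dirac (0 : ℝ) + (2 : ENNReal)⁻¹ • Measure.dirac (1 : ℝ)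

/-- Weak convergence of a sequence of measures, tested against bounded continuous
functions. -/
def WeakLim (s : ℕ → Measure ℝ) (ν₀ : Measure ℝ) : Prop :=
  ∀ f : BoundedContinuousFunction ℝ ℝ,
    Tendsto (fun n => ∫ x, f x ∂(s n)) atTop (𝓝 (∫ x, f x ∂ν₀))

lemma zset_empty_of_supported (μ : Measure ℝ) [IsProbabilityMeasure μ]
    {b : ℝ} (hb0 : 0 ≤ b) (hb1 : b < 1) (hsupp : μ (Set.Icc (0:ℝ) b)ᶜ = 0) :
    Zset μ = ∅ := by
  haveI : Fact ((0:ℝ) < 1) := ⟨one_pos⟩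
  rw [Set.eq_empty_iff_forall_notMem]
  intro ξ hξ
  -- h x = exp(-2πi ξ x)
  set h : ℝ → ℂ := fun x => Complex.exp (-(2 * (Real.pi : ℂ) * Complex.I) * (ξ : ℂ) * (x : ℂ)) with hh
  have hnorm : ∀ x : ℝ, ‖h x‖ = 1 := by
    intro x
    have : h x = Complex.exp (((-(2 * Real.pi * ξ * x) : ℝ) : ℂ) * Complex.I) := by
      simp only [hh]; congr 1; push_cast; ring
    rw [this]
    exact Complex.norm_exp_ofReal_mul_I _
  have hcont : Continuous h := by
    apply Complex.continuous_exp.comp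
    continuity
  -- integrability
  have hInt : ∀ f : C(AddCircle (1:ℝ), ℂ),
      Integrable (fun x : ℝ => f (x : AddCircle (1:ℝ)) * h x) μ := by
    intro f
    refine ⟨((f.continuous.comp (AddCircle.continuous_mk' 1)).mul hcont).aestronglyMeasurable, ?_⟩
    apply MeasureTheory.HasFiniteIntegral.of_bounded (C := ‖f‖)
    filter_upwards with x
    rw [norm_mul, hnorm, mul_one]
    exact ContinuousMap.norm_coe_le_norm f _
  -- the bounded linear functional
  let L : C(AddCircle (1:ℝ), ℂ) →ₗ[ℂ] ℂ :=
    { toFun := fun f => ∫ x, f (x : AddCircle (1:ℝ)) * h x ∂μ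
      map_add' := fun f g => by
        simp only [ContinuousMap.add_apply, add_mul]
        exact integral_add (hInt f) (hInt g)
      map_smul' := fun cst f => by
        simp only [ContinuousMap.smul_apply, smul_eq_mul, mul_assoc, RingHom.id_apply]
        rw [MeasureTheory.integral_const_mul] }
  have hLbound : ∀ f : C(AddCircle (1:ℝ), ℂ), ‖L f‖ ≤ 1 * ‖f‖ := by
    intro f
    rw [one_mul]
    have := MeasureTheory.norm_integral_le_of_norm_le_const (μ := μ)
      (f := fun x : ℝ => f (x : AddCircle (1:ℝ)) * h x) (C := ‖f‖) ?_
    · exact (by simpa [measure_univ] using this : ‖∫ x, f (x : AddCircle (1:ℝ)) * h x ∂μ‖ ≤ ‖f‖)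
    · filter_upwards with x
      rw [norm_mul, hnorm, mul_one]
      exact ContinuousMap.norm_coe_le_norm f _
  let Lc : C(AddCircle (1:ℝ), ℂ) →L[ℂ] ℂ := L.mkContinuous 1 hLbound
  -- fourier monomials are in the kernel
  have hker : ∀ n : ℤ, Lc (fourier n) = 0 := by
    intro n
    have heq : (fun x : ℝ => (fourier n : C(AddCircle (1:ℝ), ℂ)) (x : AddCircle (1:ℝ)) * h x)
        = fun x : ℝ => Complex.exp (-(2 * (Real.pi : ℂ) * Complex.I) * (((ξ + ((-n : ℤ) : ℝ) : ℝ)) : ℂ) * (x : ℂ)) := by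
      funext x
      rw [fourier_coe_apply, hh, ← Complex.exp_add]
      congr 1
      push_cast
      ring
    have : Lc (fourier n) = FT μ (ξ + ((-n : ℤ) : ℝ)) := by
      show (∫ x, (fourier n : C(AddCircle (1:ℝ), ℂ)) (x : AddCircle (1:ℝ)) * h x ∂μ) = _
      rw [heq]; rfl
    rw [this]
    exact hξ (-n)
  have hspan : Submodule.span ℂ (Set.range (@fourier 1)) ≤ LinearMap.ker (Lc : C(AddCircle (1:ℝ), ℂ) →ₗ[ℂ] ℂ) := by
    rw [Submodule.span_le]
    rintro _ ⟨n, rfl⟩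
    exact LinearMap.mem_ker.mpr (hker n)
  have htop : (⊤ : Submodule ℂ C(AddCircle (1:ℝ), ℂ)) ≤ LinearMap.ker (Lc : C(AddCircle (1:ℝ), ℂ) →ₗ[ℂ] ℂ) := by
    rw [← span_fourier_closure_eq_top]
    exact Submodule.topologicalClosure_minimal _ hspan (ContinuousLinearMap.isClosed_ker Lc)
  -- the test function G
  have h1b : (0:ℝ) < 1 - b := by linarith
  set w : ℝ → ℝ := fun x => min x ((b / (1 - b)) * (1 - x)) with hw
  set f : ℝ → ℂ := fun x => Complex.exp ((2 * (Real.pi : ℂ) * Complex.I) * (ξ : ℂ) * ((w x : ℝ) : ℂ)) with hf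
  have hwcont : Continuous w := continuous_id.min (by continuity)
  have hfcont : Continuous f := by
    apply Complex.continuous_exp.comp
    exact (continuous_const.mul (Complex.continuous_ofReal.comp hwcont))
  have hf01 : f 0 = f (0 + 1) := by
    have hw0 : w 0 = 0 := by
      simp only [hw]
      rw [min_eq_left]
      positivity
    have hw1 : w 1 = 0 := by
      simp only [hw]
      norm_num
    simp [hf, hw0, hw1]
  have hwx : ∀ x ∈ Set.Icc (0:ℝ) b, w x = x := by
    intro x hx
    simp only [hw]
    rw [min_eq_left]
    rw [div_mul_eq_mul_div, le_div_iff₀ h1b]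
    nlinarith [hx.1, hx.2]
  set G : C(AddCircle (1:ℝ), ℂ) :=
    ⟨AddCircle.liftIco 1 0 f, AddCircle.liftIco_continuous (by simpa using hf01) hfcont.continuousOn⟩ with hG
  have hGx : ∀ x ∈ Set.Icc (0:ℝ) b, G ((x : ℝ) : AddCircle (1:ℝ)) * h x = 1 := by
    intro x hx
    have hxIco : x ∈ Set.Ico (0:ℝ) (0 + 1) := ⟨hx.1, by linarith [hx.2]⟩
    have : G ((x : ℝ) : AddCircle (1:ℝ)) = f x := by
      simp only [hG, ContinuousMap.coe_mk]
      exact AddCircle.liftIco_coe_apply hxIco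
    rw [this]
    simp only [hf, hh]
    rw [hwx x hx, ← Complex.exp_add]
    rw [show (2 * (Real.pi : ℂ) * Complex.I) * (ξ:ℂ) * (x:ℂ) + -(2 * (Real.pi : ℂ) * Complex.I) * (ξ:ℂ) * (x:ℂ) = 0 by ring]
    exact Complex.exp_zero
  have hLG : Lc G = 1 := by
    show (∫ x, G ((x : ℝ) : AddCircle (1:ℝ)) * h x ∂μ) = 1
    have hae : ∀ᵐ x ∂μ, G ((x : ℝ) : AddCircle (1:ℝ)) * h x = 1 := by
      have : ∀ᵐ x ∂μ, x ∈ Set.Icc (0:ℝ) b := by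
        rw [MeasureTheory.ae_iff]
        exact hsupp
      filter_upwards [this] with x hx using hGx x hx
    rw [MeasureTheory.integral_congr_ae hae]
    simp [measure_univ]
  have : Lc G = 0 := LinearMap.mem_ker.mp (htop (Submodule.mem_top))
  rw [hLG] at this
  exact one_ne_zero this

/-- For the pulled-back tails `ν_{>n}` of a Cantor–Moran measure (nonatomic
probability measures supported in `[0, c_n]`), if `sup_n c_n < 1` then every weak
limit `ν₀` of subsequences satisfies `ν₀({1}) = 0` and `Z(ν₀) = ∅`; together with
`Z(ν_{>n}) = ∅` for all `n`, the family `{ν_{>n}}` is admissible. -/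
theorem stmt16 (ν : ℕ → Measure ℝ)
    (hprob : ∀ n, IsProbabilityMeasure (ν n))
    (hatom : ∀ n (x : ℝ), ν n {x} = 0)
    (c : ℕ → ℝ) (hc0 : ∀ n, 0 ≤ c n)
    (hsupp : ∀ n, ν n (Set.Icc (0 : ℝ) (c n))ᶜ = 0)
    (cbar : ℝ) (hcbar : cbar < 1) (hle : ∀ n, c n ≤ cbar) :
    (∀ n, Zset (ν n) = ∅) ∧
    ∀ ν₀ : Measure ℝ, IsProbabilityMeasure ν₀ →
      (∃ φ : ℕ → ℕ, StrictMono φ ∧ WeakLim (fun j => ν (φ j)) ν₀) →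
      ν₀ {1} = 0 ∧ Zset ν₀ = ∅ := by
  have hcbar0 : (0:ℝ) ≤ cbar := le_trans (hc0 0) (hle 0)
  constructor
  · intro n
    haveI := hprob n
    exact zset_empty_of_supported (ν n) (hc0 n) (lt_of_le_of_lt (hle n) hcbar) (hsupp n)
  · rintro ν₀ hν₀ ⟨φ, hφ, hlim⟩
    haveI := hν₀
    -- bounded continuous test function vanishing exactly on [0, cbar]
    let gc : C(ℝ, ℝ) := ⟨fun x => min (Metric.infDist x (Set.Icc 0 cbar)) 1,
      (Metric.continuous_infDist_pt _).min continuous_const⟩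
    have hg0 : ∀ x, 0 ≤ gc x := fun x => le_min Metric.infDist_nonneg zero_le_one
    have hg1 : ∀ x, gc x ≤ 1 := fun x => min_le_right _ _
    let gb : BoundedContinuousFunction ℝ ℝ := BoundedContinuousFunction.mkOfBound gc 1
      (fun x y => by
        rw [Real.dist_eq, abs_sub_le_iff]
        constructor <;> nlinarith [hg0 x, hg0 y, hg1 x, hg1 y])
    have hgb : ∀ x, gb x = min (Metric.infDist x (Set.Icc 0 cbar)) 1 := fun x => rfl
    have hzero : ∀ j, ∫ x, gb x ∂(ν (φ j)) = 0 := by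
      intro j
      haveI := hprob (φ j)
      have hae : ∀ᵐ x ∂(ν (φ j)), gb x = 0 := by
        have h1 : ∀ᵐ x ∂(ν (φ j)), x ∈ Set.Icc (0:ℝ) (c (φ j)) := by
          rw [MeasureTheory.ae_iff]; exact hsupp (φ j)
        filter_upwards [h1] with x hx
        have hmem : x ∈ Set.Icc (0:ℝ) cbar := ⟨hx.1, le_trans hx.2 (hle _)⟩
        rw [hgb, Metric.infDist_zero_of_mem hmem]
        simp
      calc ∫ x, gb x ∂(ν (φ j)) = ∫ _x, (0:ℝ) ∂(ν (φ j)) := integral_congr_ae hae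
        _ = 0 := integral_zero _ _
    have hlim0 : ∫ x, gb x ∂ν₀ = 0 := by
      have h := hlim gb
      simp only [hzero] at h
      exact tendsto_nhds_unique h tendsto_const_nhds
    have haez : ∀ᵐ x ∂ν₀, gb x = 0 := by
      have hInt : Integrable (fun x => gb x) ν₀ := gb.integrable ν₀
      have h := (MeasureTheory.integral_eq_zero_iff_of_nonneg (fun x => hg0 x) hInt).mp hlim0
      filter_upwards [h] with x hx using hx
    have hnull : ν₀ (Set.Icc (0:ℝ) cbar)ᶜ = 0 := by
      rw [MeasureTheory.ae_iff] at haez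
      refine measure_mono_null ?_ haez
      intro x hx
      have hpos : 0 < Metric.infDist x (Set.Icc (0:ℝ) cbar) :=
        (isClosed_Icc.notMem_iff_infDist_pos ⟨0, Set.mem_Icc.mpr ⟨le_refl 0, hcbar0⟩⟩).mp hx
      show ¬ (gb x = 0)
      have : 0 < gb x := by rw [hgb]; exact lt_min hpos one_pos
      linarith
    constructor
    · refine measure_mono_null ?_ hnull
      intro x hx
      rw [Set.mem_singleton_iff] at hx
      subst hx
      simp only [Set.mem_compl_iff, Set.mem_Icc, not_and, not_le]
      intro _
      exact hcbar
    · exact zset_empty_of_supported ν₀ hcbar0 hcbar hnull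
end

section
/- Suppose n ∈ ℕ, and k ∈ ℤ is written as k = ℓ₁ + N_{n+1}ℓ₂ + N_{n+1}N_{n+2}ℓ₃ + ⋯ + N_{n+1}⋯N_{n+r−1}ℓ_r with ℓ_t ∈ {0,1,...,N_{n+t}−1}. Define ξ₁ = 1/2 and ξ_t = (ξ_{t−1} + ℓ_{t−1})/N_{n+t−1} for t ≥ 2. Then ν̂_{>n}(1/2 + k) = (∏_{t=1}^{r} δ̂_{B_{n+t}/N_{n+t}}(ξ_t + ℓ_t)) · ν̂_{>(n+r)}(ξ_{r+1}). -/
open MeasureTheory Filter Topology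

/-- `δ̂_{B_m/N_m}(ξ) = (1/#B_m) ∑_{b ∈ B_m} e^{-2πi(b/N_m)ξ}`. -/
noncomputable def mask (N : ℕ → ℕ) (B : ℕ → Finset ℕ) (m : ℕ) (ξ : ℝ) : ℂ :=
  (1 / ((B m).card : ℂ)) * ∑ b ∈ B m,
    Complex.exp (-(2 * (Real.pi : ℂ) * Complex.I) * ((b : ℂ) / (N m : ℂ)) * (ξ : ℂ))

lemma mask_period (N : ℕ → ℕ) (B : ℕ → Finset ℕ) (m : ℕ) (hm : N m ≠ 0)
    (x : ℝ) (j : ℕ) : mask N B m (x + (N m : ℝ) * (j : ℝ)) = mask N B m x := by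
  unfold mask
  congr 1
  refine Finset.sum_congr rfl fun b _ => ?_
  have hNC : (N m : ℂ) ≠ 0 := by exact_mod_cast hm
  have : (-(2 * (Real.pi : ℂ) * Complex.I) * ((b : ℂ) / (N m : ℂ)) *
      ((x + (N m : ℝ) * (j : ℝ) : ℝ) : ℂ)) =
      -(2 * (Real.pi : ℂ) * Complex.I) * ((b : ℂ) / (N m : ℂ)) * (x : ℂ) +
      ((-(b * j : ℕ) : ℤ) : ℂ) * (2 * (Real.pi : ℂ) * Complex.I) := by
    push_cast
    field_simp
    ring
  rw [this, Complex.exp_add, Complex.exp_int_mul_two_pi_mul_I, mul_one]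

lemma aux17 (N : ℕ → ℕ) (hN : ∀ n, 2 ≤ N n)
    (B : ℕ → Finset ℕ)
    (ν : ℕ → Measure ℝ)
    (hRef : ∀ n (ξ : ℝ), FT (ν n) ξ = mask N B (n+1) ξ * FT (ν (n+1)) (ξ / (N (n+1) : ℝ))) :
    ∀ (r n : ℕ) (a : ℝ) (l : ℕ → ℕ) (ξ : ℕ → ℝ),
      ξ 0 = a →
      (∀ t, ξ (t + 1) = (ξ t + (l t : ℝ)) / (N (n + 1 + t) : ℝ)) →
      FT (ν n) (a + (∑ i ∈ Finset.range r, l i * ∏ s ∈ Finset.range i, N (n + 1 + s) : ℕ)) =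
        (∏ i ∈ Finset.range r, mask N B (n + 1 + i) (ξ i + (l i : ℝ))) *
          FT (ν (n + r)) (ξ r) := by
  intro r
  induction r with
  | zero =>
    intro n a l ξ hξ0 hξ
    simp [hξ0]
  | succ r ih =>
    intro n a l ξ hξ0 hξ
    have hNpos : (0:ℝ) < (N (n+1) : ℝ) := by
      exact_mod_cast lt_of_lt_of_le (by norm_num) (hN (n+1))
    have hNne : (N (n+1) : ℝ) ≠ 0 := ne_of_gt hNpos
    set k' : ℕ := ∑ i ∈ Finset.range r, l (i+1) * ∏ s ∈ Finset.range i, N (n + 2 + s) with hk'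
    have hksplit : (∑ i ∈ Finset.range (r+1), l i * ∏ s ∈ Finset.range i, N (n + 1 + s))
        = N (n+1) * k' + l 0 := by
      rw [Finset.sum_range_succ']
      congr 1
      · rw [hk', Finset.mul_sum]
        refine Finset.sum_congr rfl fun i _ => ?_
        rw [Finset.prod_range_succ']
        have : ∀ s, N (n + 1 + (s + 1)) = N (n + 2 + s) := by intro s; ring_nf
        simp only [this]
        ring
      · simp
    rw [hksplit]
    rw [hRef n]
    have harg : (a + ((N (n+1) * k' + l 0 : ℕ) : ℝ)) = (a + (l 0 : ℝ)) + (N (n+1) : ℝ) * (k' : ℝ) := by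
      push_cast; ring
    have hmask : mask N B (n+1) (a + ((N (n+1) * k' + l 0 : ℕ) : ℝ)) =
        mask N B (n+1) (ξ 0 + (l 0 : ℝ)) := by
      rw [harg, mask_period N B (n+1) (by have := hN (n+1); omega) (a + (l 0 : ℝ)) k', hξ0]
    have hdiv : (a + ((N (n+1) * k' + l 0 : ℕ) : ℝ)) / (N (n+1) : ℝ) = ξ 1 + (k' : ℝ) := by
      rw [hξ 0, hξ0]
      have : n + 1 + 0 = n + 1 := by ring
      rw [this]
      field_simp
      push_cast
      ring
    rw [hmask, hdiv]
    have ihspec := ih (n+1) (ξ 1) (fun i => l (i+1)) (fun i => ξ (i+1)) rfl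
      (by intro t
          have := hξ (t+1)
          have h2 : n + 1 + (t + 1) = n + 1 + 1 + t := by ring
          rw [h2] at this
          exact this)
    have hidx : ∀ s, n + 1 + 1 + s = n + 2 + s := by intro s; ring
    simp only [hidx] at ihspec
    rw [ihspec]
    have hprod : (∏ i ∈ Finset.range (r+1), mask N B (n + 1 + i) (ξ i + (l i : ℝ)))
        = mask N B (n+1) (ξ 0 + (l 0 : ℝ)) *
          ∏ i ∈ Finset.range r, mask N B (n + 2 + i) (ξ (i+1) + (l (i+1) : ℝ)) := by
      rw [Finset.prod_range_succ']
      have : ∀ i, n + 1 + (i + 1) = n + 2 + i := by intro i; ring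
      simp only [this, add_zero]
      ring
    rw [hprod]
    have : n + 1 + r = n + (r + 1) := by ring
    rw [this]
    ring

/-- Iterating the refinement identity
`ν̂_{>n}(ξ) = δ̂_{B_{n+1}/N_{n+1}}(ξ)·ν̂_{>(n+1)}(ξ/N_{n+1})`: if
`k = ℓ₁ + N_{n+1}ℓ₂ + ⋯ + N_{n+1}⋯N_{n+r-1}ℓ_r` with `ℓ_t ∈ {0,...,N_{n+t}-1}`,
and `ξ₁ = 1/2`, `ξ_{t+1} = (ξ_t + ℓ_t)/N_{n+t}`, then
`ν̂_{>n}(1/2+k) = (∏_{t=1}^r δ̂_{B_{n+t}/N_{n+t}}(ξ_t+ℓ_t)) · ν̂_{>(n+r)}(ξ_{r+1})`. -/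
theorem stmt17 (N : ℕ → ℕ) (hN : ∀ n, 2 ≤ N n)
    (B : ℕ → Finset ℕ) (hne : ∀ n, (B n).Nonempty) (hsub : ∀ n, ∀ b ∈ B n, b < N n)
    (ν : ℕ → Measure ℝ)
    (hRef : ∀ n (ξ : ℝ), FT (ν n) ξ = mask N B (n+1) ξ * FT (ν (n+1)) (ξ / (N (n+1) : ℝ)))
    (n r : ℕ) (l : ℕ → ℕ) (hl : ∀ t, 1 ≤ t → t ≤ r → l t < N (n + t))
    (k : ℕ)
    (hk : k = ∑ t ∈ Finset.Icc 1 r, l t * ∏ s ∈ Finset.Icc 1 (t - 1), N (n + s))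
    (ξ : ℕ → ℝ) (hξ1 : ξ 1 = 1/2)
    (hξ : ∀ t, 1 ≤ t → ξ (t + 1) = (ξ t + (l t : ℝ)) / (N (n + t) : ℝ)) :
    FT (ν n) (1/2 + (k : ℝ)) =
      (∏ t ∈ Finset.Icc 1 r, mask N B (n + t) (ξ t + (l t : ℝ))) *
        FT (ν (n + r)) (ξ (r + 1)) := by
  have hIccS : ∀ (f : ℕ → ℕ) m, ∑ t ∈ Finset.Icc 1 m, f t = ∑ i ∈ Finset.range m, f (1 + i) := by
    intro f m
    rw [← Finset.Ico_add_one_right_eq_Icc, Finset.sum_Ico_eq_sum_range]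
    simp
  have hIccP : ∀ (f : ℕ → ℂ) m, ∏ t ∈ Finset.Icc 1 m, f t = ∏ i ∈ Finset.range m, f (1 + i) := by
    intro f m
    rw [← Finset.Ico_add_one_right_eq_Icc, Finset.prod_Ico_eq_prod_range]
    simp
  have hIccPN : ∀ (f : ℕ → ℕ) m, ∏ t ∈ Finset.Icc 1 m, f t = ∏ i ∈ Finset.range m, f (1 + i) := by
    intro f m
    rw [← Finset.Ico_add_one_right_eq_Icc, Finset.prod_Ico_eq_prod_range]
    simp
  have hkr : k = ∑ i ∈ Finset.range r, l (1 + i) * ∏ s ∈ Finset.range i, N (n + 1 + s) := by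
    rw [hk, hIccS]
    refine Finset.sum_congr rfl fun i _ => ?_
    congr 1
    have : 1 + i - 1 = i := by omega
    rw [this, hIccPN]
    refine Finset.prod_congr rfl fun s _ => ?_
    congr 1
    ring
  have key := aux17 N hN B ν hRef r n (1/2) (fun i => l (1 + i)) (fun i => ξ (1 + i))
    (by simpa using hξ1)
    (by intro t
        have h2 : n + (1 + t) = n + 1 + t := by omega
        have := hξ (1 + t) (by omega)
        rw [h2] at this
        have h1 : 1 + (t + 1) = (1 + t) + 1 := by omega
        show ξ (1 + (t + 1)) = (ξ (1 + t) + ((l (1 + t) : ℕ) : ℝ)) / ((N (n + 1 + t) : ℕ) : ℝ)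
        rw [h1]
        exact this)
  rw [hkr, key, hIccP]
  congr 1
  · refine Finset.prod_congr rfl fun i _ => ?_
    have : n + (1 + i) = n + 1 + i := by omega
    rw [this]
  · have : r + 1 = 1 + r := by omega
    rw [this]
end

section
/- Suppose the sequence of pull-back tail measures {ν_{>n}} of a Cantor–Moran measure converges weakly to ρ = (1/2)(δ₀+δ₁) and lim_{n→∞} #B_n = ∞. Then the discrete measures {δ_{B_n/N_n}} also converge weakly to ρ. -/
open MeasureTheory Filter Topology

noncomputable def ch (ξ : ℝ) (x : ℝ) : ℂ :=
  Complex.exp (-(2 * (Real.pi : ℂ) * Complex.I) * (ξ : ℂ) * (x : ℂ))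

lemma ch_cont (ξ : ℝ) : Continuous (ch ξ) :=
  Complex.continuous_exp.comp (continuous_const.mul Complex.continuous_ofReal)

lemma ch_mul (ξ η : ℝ) (x : ℝ) : ch ξ x * ch η x = ch (ξ + η) x := by
  unfold ch; rw [← Complex.exp_add]; congr 1; push_cast; ring

noncomputable def charK (ξ : ℝ) : C((Set.Icc (0:ℝ) 1), ℂ) :=
  ⟨fun k => ch ξ (k : ℝ), (ch_cont ξ).comp continuous_subtype_val⟩

lemma charK_mul (ξ η : ℝ) : charK ξ * charK η = charK (ξ + η) := by
  ext k; exact ch_mul ξ η k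

lemma charK_zero : charK 0 = 1 := by
  ext k; simp [charK, ch]

lemma star_charK (ξ : ℝ) : star (charK ξ) = charK (-ξ) := by
  ext k
  show starRingEnd ℂ (ch ξ (k:ℝ)) = ch (-ξ) (k:ℝ)
  unfold ch
  rw [← Complex.exp_conj]
  congr 1
  simp only [map_mul, map_neg, Complex.conj_I, Complex.conj_ofReal, map_ofNat]
  push_cast
  ring

noncomputable def Smod : Submodule ℂ C((Set.Icc (0:ℝ) 1), ℂ) :=
  Submodule.span ℂ (Set.range charK)

lemma charK_mem (ξ : ℝ) : charK ξ ∈ Smod := Submodule.subset_span ⟨ξ, rfl⟩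

lemma Smod_one : (1 : C((Set.Icc (0:ℝ) 1), ℂ)) ∈ Smod := by
  rw [← charK_zero]; exact charK_mem 0

lemma Smod_mul : ∀ x y, x ∈ Smod → y ∈ Smod → x * y ∈ Smod := by
  intro x y hx hy
  have h : Smod * Smod ≤ Smod := by
    rw [Smod, Submodule.span_mul_span]
    refine Submodule.span_le.2 ?_
    rintro g ⟨a, ⟨ξ, rfl⟩, b, ⟨η, rfl⟩, rfl⟩
    show charK ξ * charK η ∈ (Smod : Set _)
    rw [charK_mul]
    exact charK_mem _
  exact Submodule.mul_le.1 h x hx y hy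

lemma Smod_star : ∀ x ∈ Smod, star x ∈ Smod := by
  intro x hx
  refine Submodule.span_induction ?_ ?_ ?_ ?_ hx
  · rintro g ⟨ξ, rfl⟩; rw [star_charK]; exact charK_mem _
  · rw [star_zero]; exact Smod.zero_mem
  · intro a b _ _ ha hb; rw [star_add]; exact Smod.add_mem ha hb
  · intro c a _ ha; rw [star_smul]; exact Smod.smul_mem _ ha

noncomputable def Amod : StarSubalgebra ℂ C((Set.Icc (0:ℝ) 1), ℂ) :=
  { Smod.toSubalgebra Smod_one Smod_mul with
    star_mem' := fun {a} ha => Smod_star a ha }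

lemma mem_Amod_iff {g : C((Set.Icc (0:ℝ) 1), ℂ)} : g ∈ Amod ↔ g ∈ Smod := Iff.rfl

lemma Amod_sep : Amod.SeparatesPoints := by
  intro x y hxy
  refine ⟨_, ⟨charK (1/2), charK_mem _, rfl⟩, ?_⟩
  show ch (1/2) (x:ℝ) ≠ ch (1/2) (y:ℝ)
  unfold ch
  intro h
  rw [Complex.exp_eq_exp_iff_exists_int] at h
  obtain ⟨n, hn⟩ := h
  push_cast at hn
  have h2 : Complex.I * (Real.pi:ℂ) * (((y:ℝ):ℂ) - ((x:ℝ):ℂ) - 2*(n:ℂ)) = 0 := by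
    linear_combination hn
  have hπ : (Real.pi : ℂ) ≠ 0 := Complex.ofReal_ne_zero.2 Real.pi_ne_zero
  have h3 : (((y:ℝ):ℂ) - ((x:ℝ):ℂ) - 2*(n:ℂ)) = 0 := by
    rcases mul_eq_zero.1 h2 with h | h
    · rcases mul_eq_zero.1 h with h | h
      · exact absurd h Complex.I_ne_zero
      · exact absurd h hπ
    · exact h
  have h4 : (y:ℝ) - (x:ℝ) - 2*(n:ℝ) = 0 := by exact_mod_cast h3
  have hx1 := x.2.1; have hx2 := x.2.2; have hy1 := y.2.1; have hy2 := y.2.2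
  have hn1 : (-1:ℝ) < (n:ℝ) := by linarith
  have hn2 : ((n:ℝ)) < 1 := by linarith
  have hn1' : (-1:ℤ) < n := by exact_mod_cast hn1
  have hn2' : n < 1 := by exact_mod_cast hn2
  have hn0 : n = 0 := by omega
  apply hxy
  apply Subtype.ext
  rw [hn0] at h4
  push_cast at h4
  linarith

lemma Amod_dense : Amod.topologicalClosure = ⊤ :=
  ContinuousMap.starSubalgebra_topologicalClosure_eq_top_of_separatesPoints Amod Amod_sep

lemma FT_eq (μ : Measure ℝ) (ξ : ℝ) : FT μ ξ = ∫ x, ch ξ x ∂μ := rfl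

lemma integrable_of_bounded {E : Type*} [NormedAddCommGroup E] {g : ℝ → E}
    (μ : Measure ℝ) [IsFiniteMeasure μ] (hg : Continuous g) {C : ℝ}
    (hC : ∀ x, ‖g x‖ ≤ C) : Integrable g μ :=
  (integrable_const C).mono' hg.aestronglyMeasurable (Filter.Eventually.of_forall hC)

noncomputable def clampMap (x : ℝ) : (Set.Icc (0:ℝ) 1) := Set.projIcc 0 1 zero_le_one x

lemma clampMap_cont : Continuous clampMap := by
  unfold clampMap; exact continuous_projIcc

lemma clampMap_of_mem {x : ℝ} (hx : x ∈ Set.Icc (0:ℝ) 1) : (clampMap x : ℝ) = x := by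
  unfold clampMap
  rw [Set.projIcc_of_mem _ hx]

noncomputable def Phi (μ : Measure ℝ) (g : C((Set.Icc (0:ℝ) 1), ℂ)) : ℂ :=
  ∫ x, g (clampMap x) ∂μ

lemma comp_clamp_integrable (μ : Measure ℝ) [IsFiniteMeasure μ]
    (g : C((Set.Icc (0:ℝ) 1), ℂ)) : Integrable (fun x => g (clampMap x)) μ :=
  integrable_of_bounded μ (g.continuous.comp clampMap_cont)
    (fun x => g.norm_coe_le_norm (clampMap x))

lemma Phi_lipschitz (μ : Measure ℝ) [IsProbabilityMeasure μ] :
    LipschitzWith 1 (Phi μ) := by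
  refine LipschitzWith.of_dist_le_mul ?_
  intro g h
  rw [NNReal.coe_one, one_mul, dist_eq_norm, Phi, Phi,
    ← integral_sub (comp_clamp_integrable μ g) (comp_clamp_integrable μ h)]
  have := norm_integral_le_of_norm_le_const (μ := μ)
    (f := fun x => g (clampMap x) - h (clampMap x)) (C := dist g h) ?_
  · simpa using this
  · refine Filter.Eventually.of_forall (fun x => ?_)
    rw [← dist_eq_norm]
    exact ContinuousMap.dist_apply_le_dist (clampMap x)

lemma ae_mem_Icc {μ : Measure ℝ} (hμ : μ (Set.Icc (0 : ℝ) 1)ᶜ = 0) :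
    ∀ᵐ x ∂μ, x ∈ Set.Icc (0:ℝ) 1 := by
  rw [ae_iff]
  exact hμ

lemma Phi_charK {μ : Measure ℝ} (hμ : μ (Set.Icc (0 : ℝ) 1)ᶜ = 0) (ξ : ℝ) :
    Phi μ (charK ξ) = FT μ ξ := by
  rw [Phi, FT_eq]
  refine integral_congr_ae ?_
  filter_upwards [ae_mem_Icc hμ] with x hx
  show ch ξ ((clampMap x : ℝ)) = ch ξ x
  rw [clampMap_of_mem hx]

lemma key_lemma (μ ν : Measure ℝ) [IsProbabilityMeasure μ] [IsProbabilityMeasure ν]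
    (hμ : μ (Set.Icc (0:ℝ) 1)ᶜ = 0) (hν : ν (Set.Icc (0:ℝ) 1)ᶜ = 0)
    (h : ∀ ξ : ℝ, FT μ ξ = FT ν ξ)
    (f : ℝ → ℝ) (hf : Continuous f) {C : ℝ} (hC : ∀ x, |f x| ≤ C) :
    ∫ x, f x ∂μ = ∫ x, f x ∂ν := by
  set P : Set C((Set.Icc (0:ℝ) 1), ℂ) := {g | Phi μ g = Phi ν g} with hP
  have hPclosed : IsClosed P := by
    have : P = (fun g => Phi μ g - Phi ν g) ⁻¹' {0} := by
      ext g; simp [hP, sub_eq_zero]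
    rw [this]
    exact IsClosed.preimage
      (((Phi_lipschitz μ).continuous).sub ((Phi_lipschitz ν).continuous))
      isClosed_singleton
  have hSP : (Smod : Set C((Set.Icc (0:ℝ) 1), ℂ)) ⊆ P := by
    intro g hg
    refine Submodule.span_induction ?_ ?_ ?_ ?_ hg
    · rintro g' ⟨ξ, rfl⟩
      show Phi μ (charK ξ) = Phi ν (charK ξ)
      rw [Phi_charK hμ, Phi_charK hν, h]
    · show Phi μ 0 = Phi ν 0
      simp [Phi]
    · intro a b _ _ ha hb
      show Phi μ (a + b) = Phi ν (a + b)
      have e : ∀ (κ : Measure ℝ), IsProbabilityMeasure κ → Phi κ (a+b) = Phi κ a + Phi κ b := by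
        intro κ hκ
        rw [Phi, Phi, Phi, ← integral_add (comp_clamp_integrable κ a) (comp_clamp_integrable κ b)]
        simp
      rw [e μ ‹_›, e ν ‹_›, ha, hb]
    · intro c a _ ha
      show Phi μ (c • a) = Phi ν (c • a)
      have e : ∀ (κ : Measure ℝ), IsProbabilityMeasure κ → Phi κ (c • a) = c • Phi κ a := by
        intro κ hκ
        rw [Phi, Phi, ← integral_smul]
        simp
      rw [e μ ‹_›, e ν ‹_›, ha]
  have hPuniv : P = Set.univ := by
    have hdense : closure (Smod : Set C((Set.Icc (0:ℝ) 1), ℂ)) = Set.univ := by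
      have h2 : closure (Amod : Set C((Set.Icc (0:ℝ) 1), ℂ)) = Set.univ := by
        rw [← StarSubalgebra.topologicalClosure_coe, Amod_dense]
        rfl
      exact h2
    rw [← Set.univ_subset_iff, ← hdense]
    exact hPclosed.closure_subset_iff.2 hSP
  -- apply to the (complexified, restricted) f
  set g : C((Set.Icc (0:ℝ) 1), ℂ) :=
    ⟨fun k => ((f k : ℝ) : ℂ),
      Complex.continuous_ofReal.comp (hf.comp continuous_subtype_val)⟩ with hg
  have hgP : g ∈ P := by rw [hPuniv]; trivial
  have hgμ : Phi μ g = ∫ x, ((f x : ℝ) : ℂ) ∂μ := by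
    refine integral_congr_ae ?_
    filter_upwards [ae_mem_Icc hμ] with x hx
    show ((f (clampMap x) : ℝ) : ℂ) = _
    rw [clampMap_of_mem hx]
  have hgν : Phi ν g = ∫ x, ((f x : ℝ) : ℂ) ∂ν := by
    refine integral_congr_ae ?_
    filter_upwards [ae_mem_Icc hν] with x hx
    show ((f (clampMap x) : ℝ) : ℂ) = _
    rw [clampMap_of_mem hx]
  have : ∫ x, ((f x : ℝ) : ℂ) ∂μ = ∫ x, ((f x : ℝ) : ℂ) ∂ν := by
    rw [← hgμ, ← hgν]; exact hgP
  have e1 : ∫ x, ((f x : ℝ) : ℂ) ∂μ = ((∫ x, f x ∂μ : ℝ) : ℂ) := integral_ofReal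
  have e2 : ∫ x, ((f x : ℝ) : ℂ) ∂ν = ((∫ x, f x ∂ν : ℝ) : ℂ) := integral_ofReal
  rw [e1, e2] at this
  exact_mod_cast this



lemma norm_ch (ξ x : ℝ) : ‖ch ξ x‖ = 1 := by
  unfold ch
  rw [Complex.norm_exp]
  have : (-(2 * (Real.pi : ℂ) * Complex.I) * (ξ : ℂ) * (x : ℂ)).re = 0 := by
    simp [Complex.mul_re, Complex.mul_im]
  rw [this, Real.exp_zero]

noncomputable def mixMeasure (ν' : Measure ℝ) (B : Finset ℕ) (Nv : ℕ) : Measure ℝ :=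
  ((B.card : ENNReal))⁻¹ • ∑ b ∈ B, ν'.map (fun y => ((b : ℝ) + y) / (Nv : ℝ))

lemma affMeasurable (b Nv : ℕ) : Measurable (fun y : ℝ => ((b : ℝ) + y) / (Nv : ℝ)) :=
  ((continuous_const.add continuous_id).div_const _).measurable

lemma mixProb (ν' : Measure ℝ) [IsProbabilityMeasure ν'] (B : Finset ℕ) (hB : B.Nonempty)
    (Nv : ℕ) : IsProbabilityMeasure (mixMeasure ν' B Nv) := by
  constructor
  rw [mixMeasure, Measure.smul_apply, Measure.finset_sum_apply]
  have : ∀ b ∈ B, (ν'.map (fun y : ℝ => ((b : ℝ) + y) / (Nv : ℝ))) Set.univ = 1 := by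
    intro b _
    rw [Measure.map_apply (affMeasurable b Nv) MeasurableSet.univ]
    simp
  rw [Finset.sum_congr rfl this, Finset.sum_const, nsmul_eq_mul, mul_one, smul_eq_mul]
  rw [ENNReal.inv_mul_cancel]
  · exact_mod_cast (Finset.card_pos.2 hB).ne'
  · exact ENNReal.natCast_ne_top _

lemma mixSupp (ν' : Measure ℝ) [IsProbabilityMeasure ν']
    (hs : ν' (Set.Icc (0:ℝ) 1)ᶜ = 0) (B : Finset ℕ) (Nv : ℕ)
    (hNv : 1 ≤ Nv) (hsub : ∀ b ∈ B, b < Nv) :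
    (mixMeasure ν' B Nv) (Set.Icc (0:ℝ) 1)ᶜ = 0 := by
  rw [mixMeasure, Measure.smul_apply, Measure.finset_sum_apply]
  have : ∀ b ∈ B, (ν'.map (fun y : ℝ => ((b : ℝ) + y) / (Nv : ℝ))) (Set.Icc (0:ℝ) 1)ᶜ = 0 := by
    intro b hb
    rw [Measure.map_apply (affMeasurable b Nv) (measurableSet_Icc.compl)]
    refine le_antisymm (le_trans (measure_mono ?_) hs.le) (zero_le)
    intro y hy
    simp only [Set.mem_preimage, Set.mem_compl_iff, Set.mem_Icc] at hy ⊢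
    intro hy'
    apply hy
    have hNpos : (0:ℝ) < (Nv:ℝ) := by exact_mod_cast hNv
    constructor
    · exact div_nonneg (add_nonneg (Nat.cast_nonneg b) hy'.1) (Nat.cast_nonneg Nv)
    · rw [div_le_one hNpos]
      have : (b:ℝ) ≤ (Nv:ℝ) - 1 := by
        have := hsub b hb
        have : (b:ℝ) + 1 ≤ (Nv:ℝ) := by exact_mod_cast this
        linarith
      linarith [hy'.1, hy'.2]
  rw [Finset.sum_congr rfl this, Finset.sum_const]
  simp

lemma mixIntegral {E : Type*} [NormedAddCommGroup E] [NormedSpace ℝ E]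
    (ν' : Measure ℝ) [IsProbabilityMeasure ν'] (B : Finset ℕ) (Nv : ℕ)
    (g : ℝ → E) (hg : Continuous g) {C : ℝ} (hC : ∀ x, ‖g x‖ ≤ C) :
    ∫ x, g x ∂(mixMeasure ν' B Nv) =
      ((B.card : ℝ))⁻¹ • ∑ b ∈ B, ∫ y, g (((b : ℝ) + y) / (Nv : ℝ)) ∂ν' := by
  rw [mixMeasure, integral_smul_measure, integral_finset_sum_measure]
  · congr 1
    · rw [ENNReal.toReal_inv]
      norm_num
    · refine Finset.sum_congr rfl (fun b _ => ?_)
      rw [integral_map (affMeasurable b Nv).aemeasurable hg.aestronglyMeasurable]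
  · intro b _
    refine (integrable_map_measure hg.aestronglyMeasurable
      (affMeasurable b Nv).aemeasurable).2 ?_
    exact integrable_of_bounded ν' (hg.comp ((continuous_const.add continuous_id).div_const _))
      (fun y => hC _)

lemma mixFT (ν' : Measure ℝ) [IsProbabilityMeasure ν'] (B : Finset ℕ) (Nv : ℕ)
    (hNv : 1 ≤ Nv) (ξ : ℝ) :
    FT (mixMeasure ν' B Nv) ξ =
      ((1 / ((B.card) : ℂ)) * ∑ b ∈ B,
        Complex.exp (-(2 * (Real.pi : ℂ) * Complex.I) * ((b : ℂ) / (Nv : ℂ)) * (ξ : ℂ))) *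
      FT ν' (ξ / (Nv : ℝ)) := by
  rw [FT_eq, mixIntegral ν' B Nv (ch ξ) (ch_cont ξ) (fun x => le_of_eq (norm_ch ξ x))]
  have hNC : ((Nv:ℂ)) ≠ 0 := Nat.cast_ne_zero.2 (by omega)
  have key : ∀ b : ℕ, ∀ y : ℝ, ch ξ (((b : ℝ) + y) / (Nv : ℝ)) =
      Complex.exp (-(2 * (Real.pi : ℂ) * Complex.I) * ((b : ℂ) / (Nv : ℂ)) * (ξ : ℂ)) *
        ch (ξ / (Nv : ℝ)) y := by
    intro b y
    unfold ch
    rw [← Complex.exp_add]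
    congr 1
    push_cast
    field_simp
    ring
  have : ∀ b ∈ B, ∫ y, ch ξ (((b : ℝ) + y) / (Nv : ℝ)) ∂ν' =
      Complex.exp (-(2 * (Real.pi : ℂ) * Complex.I) * ((b : ℂ) / (Nv : ℂ)) * (ξ : ℂ)) *
        FT ν' (ξ / (Nv : ℝ)) := by
    intro b _
    rw [FT_eq]
    simp_rw [key b]
    rw [integral_const_mul]
  rw [Finset.sum_congr rfl this, ← Finset.sum_mul]
  rw [Complex.real_smul]
  push_cast
  ring


lemma rho_integral (f : BoundedContinuousFunction ℝ ℝ) :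
    ∫ x, f x ∂rho = (f 0 + f 1) / 2 := by
  have i1 : IsFiniteMeasure ((2:ENNReal)⁻¹ • Measure.dirac (0:ℝ)) := by
    constructor
    rw [Measure.smul_apply, smul_eq_mul]
    simp only [measure_univ, mul_one]
    exact lt_of_le_of_lt (by norm_num) (by norm_num : (1:ENNReal) < ⊤)
  have i2 : IsFiniteMeasure ((2:ENNReal)⁻¹ • Measure.dirac (1:ℝ)) := by
    constructor
    rw [Measure.smul_apply, smul_eq_mul]
    simp only [measure_univ, mul_one]
    exact lt_of_le_of_lt (by norm_num) (by norm_num : (1:ENNReal) < ⊤)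
  rw [rho, integral_add_measure (f.integrable _) (f.integrable _),
    integral_smul_measure, integral_smul_measure, integral_dirac, integral_dirac]
  rw [ENNReal.toReal_inv]
  norm_num
  ring

lemma approx (ν' : Measure ℝ) [IsProbabilityMeasure ν'] (hs : ν' (Set.Icc (0:ℝ) 1)ᶜ = 0)
    (B : Finset ℕ) (hB : B.Nonempty) (Nv : ℕ) (hNv : 1 ≤ Nv) (hsub : ∀ b ∈ B, b < Nv)
    (f : BoundedContinuousFunction ℝ ℝ) {ε δ : ℝ} (hδ : 0 < δ)
    (hu : ∀ x ∈ Set.Icc (0:ℝ) 1, ∀ y ∈ Set.Icc (0:ℝ) 1, dist x y < δ → dist (f x) (f y) < ε)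
    (hN : 1/(Nv:ℝ) < δ) :
    |(1/(B.card:ℝ)) * (∑ b ∈ B, f ((b:ℝ)/(Nv:ℝ))) -
      ∫ x, f x ∂(mixMeasure ν' B Nv)| ≤ ε := by
  have hNpos : (0:ℝ) < Nv := by exact_mod_cast hNv
  have hcard : (0:ℝ) < B.card := by exact_mod_cast Finset.card_pos.2 hB
  rw [mixIntegral ν' B Nv f f.continuous (C := ‖f‖) (fun x => f.norm_coe_le_norm x)]
  have hJ : ∀ b ∈ B, |f ((b:ℝ)/(Nv:ℝ)) - ∫ y, f (((b:ℝ)+y)/(Nv:ℝ)) ∂ν'| ≤ ε := by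
    intro b hb
    have hbN : (b:ℝ) ≤ (Nv:ℝ) - 1 := by
      have := hsub b hb
      have : (b:ℝ) + 1 ≤ (Nv:ℝ) := by exact_mod_cast this
      linarith
    have hint : Integrable (fun y => f (((b:ℝ)+y)/(Nv:ℝ))) ν' :=
      integrable_of_bounded ν'
        (f.continuous.comp ((continuous_const.add continuous_id).div_const _))
        (fun y => f.norm_coe_le_norm _)
    have hsub' : f ((b:ℝ)/(Nv:ℝ)) - ∫ y, f (((b:ℝ)+y)/(Nv:ℝ)) ∂ν' =
        ∫ y, (f ((b:ℝ)/(Nv:ℝ)) - f (((b:ℝ)+y)/(Nv:ℝ))) ∂ν' := by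
      rw [integral_sub (integrable_const _) hint, integral_const]
      simp
    rw [hsub', ← Real.norm_eq_abs]
    refine le_trans (norm_integral_le_of_norm_le_const (C := ε) ?_) (by simp)
    filter_upwards [ae_mem_Icc hs] with y hy
    have h1 : (b:ℝ)/(Nv:ℝ) ∈ Set.Icc (0:ℝ) 1 := by
      constructor
      · positivity
      · rw [div_le_one hNpos]; linarith
    have h2 : ((b:ℝ)+y)/(Nv:ℝ) ∈ Set.Icc (0:ℝ) 1 := by
      constructor
      · exact div_nonneg (add_nonneg (Nat.cast_nonneg b) hy.1) (Nat.cast_nonneg Nv)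
      · rw [div_le_one hNpos]; linarith [hy.2]
    have hd : dist ((b:ℝ)/(Nv:ℝ)) (((b:ℝ)+y)/(Nv:ℝ)) < δ := by
      rw [Real.dist_eq]
      have he : (b:ℝ)/(Nv:ℝ) - ((b:ℝ)+y)/(Nv:ℝ) = -(y/(Nv:ℝ)) := by
        field_simp
        ring
      rw [he, abs_neg, abs_of_nonneg (div_nonneg hy.1 (le_of_lt hNpos))]
      calc y/(Nv:ℝ) ≤ 1/(Nv:ℝ) := by
            gcongr
            exact hy.2
        _ < δ := hN
    have := hu _ h1 _ h2 hd
    rw [Real.dist_eq] at this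
    rw [Real.norm_eq_abs]
    exact le_of_lt this
  have hsplit : (1/(B.card:ℝ)) * (∑ b ∈ B, f ((b:ℝ)/(Nv:ℝ))) -
      ((B.card:ℝ))⁻¹ • ∑ b ∈ B, ∫ y, f (((b:ℝ)+y)/(Nv:ℝ)) ∂ν' =
      ((B.card:ℝ))⁻¹ * ∑ b ∈ B,
        (f ((b:ℝ)/(Nv:ℝ)) - ∫ y, f (((b:ℝ)+y)/(Nv:ℝ)) ∂ν') := by
    rw [smul_eq_mul, Finset.sum_sub_distrib]
    ring
  rw [hsplit, abs_mul, abs_of_nonneg (by positivity : (0:ℝ) ≤ ((B.card:ℝ))⁻¹)]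
  calc ((B.card:ℝ))⁻¹ * |∑ b ∈ B, (f ((b:ℝ)/(Nv:ℝ)) - ∫ y, f (((b:ℝ)+y)/(Nv:ℝ)) ∂ν')|
      ≤ ((B.card:ℝ))⁻¹ * ∑ b ∈ B, |f ((b:ℝ)/(Nv:ℝ)) - ∫ y, f (((b:ℝ)+y)/(Nv:ℝ)) ∂ν'| := by
        exact mul_le_mul_of_nonneg_left (Finset.abs_sum_le_sum_abs _ _) (by positivity)
    _ ≤ ((B.card:ℝ))⁻¹ * ∑ _b ∈ B, ε := by
        refine mul_le_mul_of_nonneg_left (Finset.sum_le_sum hJ) (by positivity)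
    _ = ε := by
        rw [Finset.sum_const, nsmul_eq_mul]
        field_simp


/-- If the pulled-back tails `ν_{>n}` (satisfying the refinement identity
`ν̂_{>n}(ξ) = δ̂_{B_{n+1}/N_{n+1}}(ξ)·ν̂_{>(n+1)}(ξ/N_{n+1})`) converge weakly to
`ρ = (1/2)(δ₀+δ₁)` and `#B_n → ∞`, then the discrete measures `δ_{B_n/N_n}` also
converge weakly to `ρ` (tested against bounded continuous functions, where
`∫ f dρ = (f(0)+f(1))/2`). -/
theorem stmt18 (N : ℕ → ℕ) (hN : ∀ n, 2 ≤ N n)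
    (B : ℕ → Finset ℕ) (hne : ∀ n, (B n).Nonempty) (hsub : ∀ n, ∀ b ∈ B n, b < N n)
    (ν : ℕ → Measure ℝ)
    (hprob : ∀ n, IsProbabilityMeasure (ν n))
    (hsupp : ∀ n, ν n (Set.Icc (0 : ℝ) 1)ᶜ = 0)
    (hRef : ∀ n (ξ : ℝ), FT (ν n) ξ =
      ((1 / ((B (n+1)).card : ℂ)) * ∑ b ∈ B (n+1),
        Complex.exp (-(2 * (Real.pi : ℂ) * Complex.I) * ((b : ℂ) / (N (n+1) : ℂ)) * (ξ : ℂ))) *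
      FT (ν (n+1)) (ξ / (N (n+1) : ℝ)))
    (hconv : WeakLim ν rho)
    (hcard : Tendsto (fun n => (B n).card) atTop atTop) :
    ∀ f : BoundedContinuousFunction ℝ ℝ,
      Tendsto (fun n => (1 / ((B n).card : ℝ)) * ∑ b ∈ B n, f ((b : ℝ) / (N n : ℝ)))
        atTop (𝓝 ((f 0 + f 1) / 2)) := by
  intro f
  have hρ := rho_integral f
  have hI : Tendsto (fun n => ∫ x, f x ∂(ν n)) atTop (𝓝 ((f 0 + f 1) / 2)) := by
    have := hconv f
    rwa [hρ] at this
  have hNinf : Tendsto (fun n => ((N n : ℝ))) atTop atTop := by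
    have h1 : ∀ n, (B n).card ≤ N n := by
      intro n
      have hss : B n ⊆ Finset.range (N n) := fun b hb => Finset.mem_range.2 (hsub n b hb)
      simpa using Finset.card_le_card hss
    exact tendsto_natCast_atTop_atTop.comp (tendsto_atTop_mono h1 hcard)
  rw [← tendsto_add_atTop_iff_nat 1]
  refine Metric.tendsto_nhds.2 (fun ε hε => ?_)
  obtain ⟨δ, hδ, hu⟩ := Metric.uniformContinuousOn_iff.1
    (isCompact_Icc.uniformContinuousOn_of_continuous (f.continuous.continuousOn)
      : UniformContinuousOn f (Set.Icc (0:ℝ) 1)) (ε/2) (by linarith)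
  have ev1 : ∀ᶠ n in atTop, 1/((N (n+1) : ℝ)) < δ := by
    have ht : Tendsto (fun n => ((N (n+1) : ℝ))) atTop atTop :=
      hNinf.comp (tendsto_add_atTop_nat 1)
    filter_upwards [ht.eventually_gt_atTop (1/δ)] with n hn
    have hNpos : (0:ℝ) < (N (n+1) : ℝ) := lt_trans (by positivity) hn
    rw [div_lt_iff₀ hNpos]
    have := (div_lt_iff₀ hδ).1 hn
    linarith
  have ev2 := Metric.tendsto_nhds.1 hI (ε/2) (by linarith)
  filter_upwards [ev1, ev2] with n h1 h2
  haveI := hprob n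
  haveI := hprob (n+1)
  haveI := mixProb (ν (n+1)) (B (n+1)) (hne (n+1)) (N (n+1))
  have hNv1 : 1 ≤ N (n+1) := le_trans one_le_two (hN (n+1))
  have hkey : ∫ x, f x ∂(ν n) = ∫ x, f x ∂(mixMeasure (ν (n+1)) (B (n+1)) (N (n+1))) := by
    refine key_lemma _ _ (hsupp n)
      (mixSupp _ (hsupp (n+1)) _ _ hNv1 (hsub (n+1))) ?_ f f.continuous (C := ‖f‖)
      (fun x => by rw [← Real.norm_eq_abs]; exact f.norm_coe_le_norm x)
    intro ξ
    rw [hRef n ξ, mixFT _ _ _ hNv1 ξ]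
  have happrox := approx (ν (n+1)) (hsupp (n+1)) (B (n+1)) (hne (n+1)) (N (n+1)) hNv1
    (hsub (n+1)) f hδ hu h1
  have htri := dist_triangle
    ((1 / (((B (n+1)).card : ℝ))) * ∑ b ∈ B (n+1), f ((b : ℝ) / (N (n+1) : ℝ)))
    (∫ x, f x ∂(ν n)) ((f 0 + f 1) / 2)
  have hd1 : dist ((1 / (((B (n+1)).card : ℝ))) * ∑ b ∈ B (n+1), f ((b : ℝ) / (N (n+1) : ℝ)))
      (∫ x, f x ∂(ν n)) ≤ ε/2 := by
    rw [Real.dist_eq, hkey]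
    exact happrox
  linarith
end
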